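/- Let R, C be positive integers, S > 0 a real number, and Υ ∈ [1, 1.52]. Suppose S/(RC) ≤ p_{ij} ≤ Υ·S/(RC) for all 1 ≤ i ≤ R, 1 ≤ j ≤ C. Define M' = (I_C − (1/C) D̄_2^{1/2} 1_C 1_C^T D̄_2^{−1/2}) (D̄_2^{−1/2} Z̄^T D̄_1^{−1/2}) (I_R − (1/R) D̄_1^{1/2} 1_R 1_R^T D̄_1^{−1/2}) (D̄_1^{−1/2} Z̄ D̄_2^{−1/2}) ∈ ℝ^{C×C}. Then ‖M'‖₂ ≤ 1 − 1/Υ³ + (Υ−1)², and this bound is at most 0.9857. -/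

import Mathlib

namespace CollapsedGibbs

open scoped Matrix

/-- The ℓ²→ℓ² operator (spectral) norm of a real matrix. -/
noncomputable def l2OpNorm {m n : ℕ} (A : Matrix (Fin m) (Fin n) ℝ) : ℝ :=
  ‖LinearMap.toContinuousLinearMap (Matrix.toEuclideanLin A)‖

/-- The matrix
`M' = (I_C − (1/C) D̄₂^{1/2} 1_C 1_Cᵀ D̄₂^{−1/2}) (D̄₂^{−1/2} Z̄ᵀ D̄₁^{−1/2})
      (I_R − (1/R) D̄₁^{1/2} 1_R 1_Rᵀ D̄₁^{−1/2}) (D̄₁^{−1/2} Z̄ D̄₂^{−1/2})`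
built from a nonnegative matrix `Z̄ = (p_{ij})` with row sums `N̄_{i·}` and column
sums `N̄_{·j}`. -/
noncomputable def Mprime {R C : ℕ} (p : Fin R → Fin C → ℝ) : Matrix (Fin C) (Fin C) ℝ :=
  let Nrow : Fin R → ℝ := fun i => ∑ j, p i j
  let Ncol : Fin C → ℝ := fun j => ∑ i, p i j
  ((1 : Matrix (Fin C) (Fin C) ℝ) -
      (C : ℝ)⁻¹ • (Matrix.diagonal (fun j => Real.sqrt (Ncol j))
        * Matrix.of (fun (_ _ : Fin C) => (1 : ℝ))
        * Matrix.diagonal (fun j => (Real.sqrt (Ncol j))⁻¹)))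
    * (Matrix.diagonal (fun j => (Real.sqrt (Ncol j))⁻¹)
        * (Matrix.of p).transpose
        * Matrix.diagonal (fun i => (Real.sqrt (Nrow i))⁻¹))
    * ((1 : Matrix (Fin R) (Fin R) ℝ) -
      (R : ℝ)⁻¹ • (Matrix.diagonal (fun i => Real.sqrt (Nrow i))
        * Matrix.of (fun (_ _ : Fin R) => (1 : ℝ))
        * Matrix.diagonal (fun i => (Real.sqrt (Nrow i))⁻¹)))
    * (Matrix.diagonal (fun i => (Real.sqrt (Nrow i))⁻¹)
        * Matrix.of p
        * Matrix.diagonal (fun j => (Real.sqrt (Ncol j))⁻¹))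

/-- If `B` is entrywise nonnegative with row sums `∑ₖ B j k * w k = r * w j` and column
sums `∑ⱼ B j k * w j = r * w k` for a positive weight `w`, then `∑ (B y)² ≤ r² ∑ y²`. -/
lemma spec_lemma {n : ℕ} (B : Matrix (Fin n) (Fin n) ℝ) (w : Fin n → ℝ) (r : ℝ)
    (hw : ∀ k, 0 < w k) (hB : ∀ j k, 0 ≤ B j k)
    (hrow : ∀ j, ∑ k, B j k * w k = r * w j)
    (hcol : ∀ k, ∑ j, B j k * w j = r * w k)
    (x : Fin n → ℝ) :
    ∑ j, (∑ k, B j k * x k) ^ 2 ≤ r ^ 2 * ∑ k, x k ^ 2 := by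
  have key : ∀ j, (∑ k, B j k * x k) ^ 2 ≤ (r * w j) * ∑ k, B j k * (x k ^ 2 / w k) := by
    intro j
    have h := Finset.sum_sq_le_sum_mul_sum_of_sq_eq_mul Finset.univ
      (r := fun k => B j k * x k) (f := fun k => B j k * w k)
      (g := fun k => B j k * (x k ^ 2 / w k))
      (fun k _ => mul_nonneg (hB j k) (hw k).le)
      (fun k _ => mul_nonneg (hB j k) (div_nonneg (sq_nonneg _) (hw k).le))
      (fun k _ => by
        field_simp [(hw k).ne'])
    rwa [hrow j] at h
  calc ∑ j, (∑ k, B j k * x k) ^ 2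
      ≤ ∑ j, (r * w j) * ∑ k, B j k * (x k ^ 2 / w k) := Finset.sum_le_sum fun j _ => key j
    _ = ∑ j, ∑ k, (x k ^ 2 / w k) * (B j k * w j) * r := by
        refine Finset.sum_congr rfl fun j _ => ?_
        rw [Finset.mul_sum]
        exact Finset.sum_congr rfl fun k _ => by ring
    _ = ∑ k, ∑ j, (x k ^ 2 / w k) * (B j k * w j) * r := Finset.sum_comm
    _ = ∑ k, (x k ^ 2 / w k) * (r * w k) * r := by
        refine Finset.sum_congr rfl fun k _ => ?_
        rw [← hcol k, ← Finset.sum_mul, ← Finset.mul_sum]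
    _ = r ^ 2 * ∑ k, x k ^ 2 := by
        rw [Finset.mul_sum]
        refine Finset.sum_congr rfl fun k _ => ?_
        field_simp [(hw k).ne']

/-- Pointwise formula for `Mprime p *ᵥ xv`. -/
lemma Mprime_mulVec {R C : ℕ} (p : Fin R → Fin C → ℝ) (v : Fin R → ℝ) (w : Fin C → ℝ)
    (hv : ∀ i, v i = Real.sqrt (∑ j, p i j)) (hw : ∀ j, w j = Real.sqrt (∑ i, p i j))
    (xv : Fin C → ℝ) (a b : Fin R → ℝ) (c : Fin C → ℝ)
    (ha : ∀ i, a i = (v i)⁻¹ * ∑ k, p i k * ((w k)⁻¹ * xv k))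
    (hb : ∀ i, b i = a i - (R : ℝ)⁻¹ * (v i * ∑ i', (v i')⁻¹ * a i'))
    (hc : ∀ j, c j = (w j)⁻¹ * ∑ i, p i j * ((v i)⁻¹ * b i))
    (j : Fin C) :
    (Mprime p *ᵥ xv) j = c j - (C : ℝ)⁻¹ * (w j * ∑ l, (w l)⁻¹ * c l) := by
  have hv' : v = fun i => Real.sqrt (∑ j, p i j) := funext hv
  have hw' : w = fun j => Real.sqrt (∑ i, p i j) := funext hw
  subst hv' hw'
  have ha' : a = fun i => _ := funext ha
  have hb' : b = fun i => _ := funext hb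
  have hc' : c = fun j => _ := funext hc
  subst ha' hb' hc'
  have hof : ∀ (u : Fin C → ℝ) (i : Fin R), (Matrix.of p *ᵥ u) i = ∑ k, p i k * u k :=
    fun u i => rfl
  have hoft : ∀ (u : Fin R → ℝ) (jj : Fin C), ((Matrix.of p).transpose *ᵥ u) jj = ∑ i, p i jj * u i :=
    fun u jj => rfl
  have hJC : ∀ (u : Fin C → ℝ) (jj : Fin C), ((Matrix.of (fun (_ _ : Fin C) => (1:ℝ))) *ᵥ u) jj = ∑ l, u l := by
    intro u jj; simp [Matrix.mulVec, dotProduct]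
  have hJR : ∀ (u : Fin R → ℝ) (ii : Fin R), ((Matrix.of (fun (_ _ : Fin R) => (1:ℝ))) *ᵥ u) ii = ∑ l, u l := by
    intro u ii; simp [Matrix.mulVec, dotProduct]
  simp only [Mprime]
  simp only [Matrix.sub_mulVec, Matrix.smul_mulVec, Matrix.one_mulVec,
    ← Matrix.mulVec_mulVec]
  simp only [Pi.sub_apply, Pi.smul_apply, smul_eq_mul, Matrix.mulVec_diagonal,
    hof, hoft, hJC, hJR]

set_option maxHeartbeats 2000000 in
/-- **Spectral-norm bound for `M'` in the second regime.**  If `Υ ∈ [1, 1.52]` and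
`S/(RC) ≤ p_{ij} ≤ Υ·S/(RC)`, then `‖M'‖₂ ≤ 1 − 1/Υ³ + (Υ−1)² ≤ 0.9857`. -/
theorem Mprime_l2OpNorm_le
    (R C : ℕ) (hR : 0 < R) (hC : 0 < C) (S : ℝ) (hS : 0 < S)
    (Υ : ℝ) (hΥ : Υ ∈ Set.Icc (1 : ℝ) 1.52)
    (p : Fin R → Fin C → ℝ)
    (hp1 : ∀ i j, S / (R * C) ≤ p i j)
    (hp2 : ∀ i j, p i j ≤ Υ * S / (R * C)) :
    l2OpNorm (Mprime p) ≤ 1 - 1 / Υ ^ 3 + (Υ - 1) ^ 2 ∧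
      1 - 1 / Υ ^ 3 + (Υ - 1) ^ 2 ≤ 0.9857 := by
  obtain ⟨hΥ1, hΥ2⟩ := hΥ
  have hΥ0 : (0:ℝ) < Υ := by linarith
  have hR0 : (0:ℝ) < (R:ℝ) := by exact_mod_cast hR
  have hC0 : (0:ℝ) < (C:ℝ) := by exact_mod_cast hC
  haveI : Nonempty (Fin R) := ⟨⟨0, hR⟩⟩
  haveI : Nonempty (Fin C) := ⟨⟨0, hC⟩⟩
  have hΥ3 : (1:ℝ) ≤ Υ ^ 3 := one_le_pow₀ hΥ1
  have hΥ3pos : (0:ℝ) < Υ ^ 3 := pow_pos hΥ0 3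
  set r : ℝ := 1 - (Υ ^ 3)⁻¹ with hr_def
  have hinv3 : (Υ ^ 3)⁻¹ ≤ 1 := by
    rw [inv_le_one_iff₀]; right; exact hΥ3
  have hinv3pos : (0:ℝ) < (Υ ^ 3)⁻¹ := inv_pos.mpr hΥ3pos
  have hr0 : 0 ≤ r := by rw [hr_def]; linarith
  have hr1 : r ≤ 1 := by rw [hr_def]; linarith
  set K : ℝ := 1 - 1 / Υ ^ 3 + (Υ - 1) ^ 2 with hK_def
  have hKr : K = r + (Υ - 1) ^ 2 := by rw [hK_def, hr_def, one_div]
  have hK0 : 0 ≤ K := by rw [hKr]; nlinarith [sq_nonneg (Υ - 1)]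
  have hpoly : r ^ 2 * (1 + Υ) ^ 2 / (4 * Υ) ≤ K ^ 2 := by
    have hid : 4 * Υ * K ^ 2 - r ^ 2 * (1 + Υ) ^ 2
        = (Υ - 1) ^ 2 * (8 * Υ * r + 4 * Υ * (Υ - 1) ^ 2 - r ^ 2) := by
      rw [hKr]; ring
    have h2 : 0 ≤ 8 * Υ * r + 4 * Υ * (Υ - 1) ^ 2 - r ^ 2 := by nlinarith
    have h3 : 0 ≤ 4 * Υ * K ^ 2 - r ^ 2 * (1 + Υ) ^ 2 := by
      rw [hid]; exact mul_nonneg (sq_nonneg _) h2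
    rw [div_le_iff₀ (by linarith : (0:ℝ) < 4 * Υ)]
    linarith
  constructor
  case right =>
    -- numeric bound
    have h3 : Υ ^ 3 ≤ (1.52:ℝ) ^ 3 := by nlinarith
    have h4 : (Υ - 1) ^ 2 ≤ (0.52:ℝ) ^ 2 := by nlinarith
    have h6 : Υ ^ 3 * ((Υ - 1) ^ 2 + 0.0143) ≤ (1.52:ℝ) ^ 3 * ((0.52:ℝ) ^ 2 + 0.0143) :=
      mul_le_mul h3 (by linarith) (by positivity) (by positivity)
    have h6' : (1.52:ℝ) ^ 3 * ((0.52:ℝ) ^ 2 + 0.0143) ≤ 1 := by norm_num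
    have h7 : Υ ^ 3 * ((Υ - 1) ^ 2 + 0.0143) ≤ 1 := le_trans h6 h6'
    have h8 : (Υ - 1) ^ 2 + 0.0143 ≤ 1 / Υ ^ 3 := by
      rw [le_div_iff₀ hΥ3pos]; linarith [h7]
    linarith
  case left =>
    -- setup: entry bounds
    obtain ⟨s, hs_def⟩ : ∃ s : ℝ, s = S / (R * C) := ⟨_, rfl⟩
    have hs : 0 < s := by rw [hs_def]; exact div_pos hS (mul_pos hR0 hC0)
    have hps : ∀ i j, s ≤ p i j := by intro i j; rw [hs_def]; exact hp1 i j
    have hpU : ∀ i j, p i j ≤ Υ * s := by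
      intro i j; rw [hs_def, ← mul_div_assoc]; exact hp2 i j
    have hpp : ∀ i j, 0 < p i j := fun i j => lt_of_lt_of_le hs (hps i j)
    -- row and column sums
    obtain ⟨Nr, hNr_def⟩ : ∃ Nr : Fin R → ℝ, Nr = fun i => ∑ j, p i j := ⟨_, rfl⟩
    obtain ⟨Nc, hNc_def⟩ : ∃ Nc : Fin C → ℝ, Nc = fun j => ∑ i, p i j := ⟨_, rfl⟩
    have hNr_app : ∀ i, Nr i = ∑ j, p i j := fun i => by rw [hNr_def]
    have hNc_app : ∀ j, Nc j = ∑ i, p i j := fun j => by rw [hNc_def]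
    have hNr_pos : ∀ i, 0 < Nr i := fun i => by
      rw [hNr_app]; exact Finset.sum_pos (fun j _ => hpp i j) Finset.univ_nonempty
    have hNc_pos : ∀ j, 0 < Nc j := fun j => by
      rw [hNc_app]; exact Finset.sum_pos (fun i _ => hpp i j) Finset.univ_nonempty
    have hconstC : ∀ x : ℝ, ∑ _j : Fin C, x = (C:ℝ) * x := by
      intro x; rw [Finset.sum_const, Finset.card_univ, Fintype.card_fin, nsmul_eq_mul]
    have hconstR : ∀ x : ℝ, ∑ _i : Fin R, x = (R:ℝ) * x := by
      intro x; rw [Finset.sum_const, Finset.card_univ, Fintype.card_fin, nsmul_eq_mul]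
    have hNr_le : ∀ i, Nr i ≤ (C:ℝ) * (Υ * s) := by
      intro i
      rw [hNr_app]
      calc (∑ j, p i j) ≤ ∑ _j : Fin C, Υ * s := Finset.sum_le_sum fun j _ => hpU i j
        _ = (C:ℝ) * (Υ * s) := hconstC _
    have hNc_le : ∀ j, Nc j ≤ (R:ℝ) * (Υ * s) := by
      intro j
      rw [hNc_app]
      calc (∑ i, p i j) ≤ ∑ _i : Fin R, Υ * s := Finset.sum_le_sum fun i _ => hpU i j
        _ = (R:ℝ) * (Υ * s) := hconstR _
    have hNc_ge : ∀ j, (R:ℝ) * s ≤ Nc j := by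
      intro j
      rw [hNc_app]
      calc (R:ℝ) * s = ∑ _i : Fin R, s := (hconstR s).symm
        _ ≤ ∑ i, p i j := Finset.sum_le_sum fun i _ => hps i j
    obtain ⟨v, hv_def⟩ : ∃ v : Fin R → ℝ, v = fun i => Real.sqrt (Nr i) := ⟨_, rfl⟩
    obtain ⟨w, hw_def⟩ : ∃ w : Fin C → ℝ, w = fun j => Real.sqrt (Nc j) := ⟨_, rfl⟩
    have hv_app : ∀ i, v i = Real.sqrt (Nr i) := fun i => by rw [hv_def]
    have hw_app : ∀ j, w j = Real.sqrt (Nc j) := fun j => by rw [hw_def]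
    have hv_pos : ∀ i, 0 < v i := fun i => by
      rw [hv_app]; exact Real.sqrt_pos.mpr (hNr_pos i)
    have hw_pos : ∀ j, 0 < w j := fun j => by
      rw [hw_app]; exact Real.sqrt_pos.mpr (hNc_pos j)
    have hv_sq : ∀ i, v i * v i = Nr i := fun i => by
      rw [hv_app]; exact Real.mul_self_sqrt (hNr_pos i).le
    have hw_sq : ∀ j, w j * w j = Nc j := fun j => by
      rw [hw_app]; exact Real.mul_self_sqrt (hNc_pos j).le
    have hvs : ∀ i, v i = Real.sqrt (∑ j, p i j) := fun i => by rw [hv_app, hNr_app]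
    have hws : ∀ j, w j = Real.sqrt (∑ i, p i j) := fun j => by rw [hw_app, hNc_app]
    obtain ⟨Stot, hStot_def⟩ : ∃ Stot : ℝ, Stot = ∑ j, Nc j := ⟨_, rfl⟩
    have hStot_pos : 0 < Stot := by
      rw [hStot_def]; exact Finset.sum_pos (fun j _ => hNc_pos j) Finset.univ_nonempty
    have hStot_w : ∑ j, w j * w j = Stot := by
      rw [hStot_def]; exact Finset.sum_congr rfl fun j _ => hw_sq j
    have hStot_ge : (C:ℝ) * ((R:ℝ) * s) ≤ Stot := by
      rw [hStot_def]
      calc (C:ℝ) * ((R:ℝ) * s) = ∑ _j : Fin C, (R:ℝ) * s := (hconstC _).symm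
        _ ≤ ∑ j, Nc j := Finset.sum_le_sum fun j _ => hNc_ge j
    -- the Gram-type matrix
    obtain ⟨G, hG_def⟩ : ∃ G : Matrix (Fin C) (Fin C) ℝ,
        G = Matrix.of (fun j k => ∑ i, (w j)⁻¹ * p i j * ((Nr i)⁻¹ * (p i k * (w k)⁻¹))) :=
      ⟨_, rfl⟩
    have hG_apply : ∀ j k, G j k = ∑ i, (w j)⁻¹ * p i j * ((Nr i)⁻¹ * (p i k * (w k)⁻¹)) :=
      fun j k => by rw [hG_def]; rfl
    have hwNc : ∀ j, (w j)⁻¹ * Nc j = w j := by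
      intro j; rw [← hw_sq j, ← mul_assoc, inv_mul_cancel₀ (hw_pos j).ne', one_mul]
    have hGrow : ∀ j, ∑ k, G j k * w k = w j := by
      intro j
      have h1 : ∀ k, G j k * w k = ∑ i, (w j)⁻¹ * p i j * ((Nr i)⁻¹ * p i k) := by
        intro k
        rw [hG_apply, Finset.sum_mul]
        refine Finset.sum_congr rfl fun i _ => ?_
        rw [show (w j)⁻¹ * p i j * ((Nr i)⁻¹ * (p i k * (w k)⁻¹)) * w k
            = (w j)⁻¹ * p i j * ((Nr i)⁻¹ * p i k) * ((w k)⁻¹ * w k) from by ring,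
          inv_mul_cancel₀ (hw_pos k).ne', mul_one]
      rw [Finset.sum_congr rfl fun k _ => h1 k, Finset.sum_comm]
      have h2 : ∀ i, ∑ k, (w j)⁻¹ * p i j * ((Nr i)⁻¹ * p i k) = (w j)⁻¹ * p i j := by
        intro i
        rw [← Finset.mul_sum, ← Finset.mul_sum]
        rw [show (∑ k, p i k) = Nr i from (hNr_app i).symm]
        rw [inv_mul_cancel₀ (hNr_pos i).ne', mul_one]
      rw [Finset.sum_congr rfl fun i _ => h2 i, ← Finset.mul_sum]
      rw [show (∑ i, p i j) = Nc j from (hNc_app j).symm]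
      exact hwNc j
    have hGsym : ∀ j k, G j k = G k j := by
      intro j k
      rw [hG_apply, hG_apply]
      exact Finset.sum_congr rfl fun i _ => by ring
    have hGcol : ∀ k, ∑ j, G j k * w j = w k := by
      intro k
      calc ∑ j, G j k * w j = ∑ j, G k j * w j :=
            Finset.sum_congr rfl fun j _ => by rw [hGsym j k]
        _ = w k := hGrow k
    -- entrywise lower bound on G
    have hCUs : (0:ℝ) < (C:ℝ) * (Υ * s) := mul_pos hC0 (mul_pos hΥ0 hs)
    have hGlb : ∀ j k, (Υ ^ 3)⁻¹ * (w j * w k) / Stot ≤ G j k := by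
      intro j k
      have hterm : ∀ i : Fin R,
          s * s * (((C:ℝ) * (Υ * s))⁻¹ * ((w j)⁻¹ * (w k)⁻¹))
            ≤ (w j)⁻¹ * p i j * ((Nr i)⁻¹ * (p i k * (w k)⁻¹)) := by
        intro i
        have h1 : ((C:ℝ) * (Υ * s))⁻¹ ≤ (Nr i)⁻¹ :=
          inv_anti₀ (hNr_pos i) (hNr_le i)
        have hss : s * s ≤ p i j * p i k :=
          mul_le_mul (hps i j) (hps i k) hs.le (hpp i j).le
        have h2 : s * s * ((C:ℝ) * (Υ * s))⁻¹ ≤ p i j * p i k * (Nr i)⁻¹ :=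
          mul_le_mul hss h1 (inv_pos.mpr hCUs).le (mul_pos (hpp i j) (hpp i k)).le
        calc s * s * (((C:ℝ) * (Υ * s))⁻¹ * ((w j)⁻¹ * (w k)⁻¹))
            = (s * s * ((C:ℝ) * (Υ * s))⁻¹) * ((w j)⁻¹ * (w k)⁻¹) := by ring
          _ ≤ (p i j * p i k * (Nr i)⁻¹) * ((w j)⁻¹ * (w k)⁻¹) :=
              mul_le_mul_of_nonneg_right h2
                (mul_pos (inv_pos.mpr (hw_pos j)) (inv_pos.mpr (hw_pos k))).le
          _ = (w j)⁻¹ * p i j * ((Nr i)⁻¹ * (p i k * (w k)⁻¹)) := by ring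
      have hsum : (R:ℝ) * (s * s * (((C:ℝ) * (Υ * s))⁻¹ * ((w j)⁻¹ * (w k)⁻¹))) ≤ G j k := by
        rw [hG_apply]
        calc (R:ℝ) * (s * s * (((C:ℝ) * (Υ * s))⁻¹ * ((w j)⁻¹ * (w k)⁻¹)))
            = ∑ _i : Fin R, s * s * (((C:ℝ) * (Υ * s))⁻¹ * ((w j)⁻¹ * (w k)⁻¹)) := (hconstR _).symm
          _ ≤ _ := Finset.sum_le_sum fun i _ => hterm i
      refine le_trans ?_ hsum
      have hkey : (C:ℝ) * s * (Nc j * Nc k) ≤ Υ ^ 2 * (R:ℝ) * s ^ 2 * Stot := by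
        have hjk : Nc j * Nc k ≤ ((R:ℝ) * (Υ * s)) * ((R:ℝ) * (Υ * s)) :=
          mul_le_mul (hNc_le j) (hNc_le k) (hNc_pos k).le
            (mul_pos hR0 (mul_pos hΥ0 hs)).le
        have k1 : (C:ℝ) * s * (Nc j * Nc k)
            ≤ (C:ℝ) * s * (((R:ℝ) * (Υ * s)) * ((R:ℝ) * (Υ * s))) :=
          mul_le_mul_of_nonneg_left hjk (mul_pos hC0 hs).le
        have k2 : (Υ ^ 2 * (R:ℝ) * s ^ 2) * ((C:ℝ) * ((R:ℝ) * s))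
            ≤ (Υ ^ 2 * (R:ℝ) * s ^ 2) * Stot :=
          mul_le_mul_of_nonneg_left hStot_ge
            (mul_nonneg (mul_nonneg (pow_pos hΥ0 2).le hR0.le) (pow_pos hs 2).le)
        linarith only [k1, k2]
      rw [div_le_iff₀ hStot_pos]
      rw [← mul_le_mul_iff_of_pos_right (mul_pos (hw_pos j) (hw_pos k))]
      have hL : (Υ ^ 3)⁻¹ * (w j * w k) * (w j * w k)
          = (Υ ^ 3)⁻¹ * (Nc j * Nc k) := by
        rw [← hw_sq j, ← hw_sq k]; ring
      have hRt : (R:ℝ) * (s * s * (((C:ℝ) * (Υ * s))⁻¹ * ((w j)⁻¹ * (w k)⁻¹))) * Stot * (w j * w k)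
          = (R:ℝ) * s * s * ((C:ℝ) * (Υ * s))⁻¹ * Stot := by
        rw [show (R:ℝ) * (s * s * (((C:ℝ) * (Υ * s))⁻¹ * ((w j)⁻¹ * (w k)⁻¹))) * Stot * (w j * w k)
            = (R:ℝ) * s * s * ((C:ℝ) * (Υ * s))⁻¹ * Stot * (((w j)⁻¹ * w j) * ((w k)⁻¹ * w k))
            from by ring,
          inv_mul_cancel₀ (hw_pos j).ne', inv_mul_cancel₀ (hw_pos k).ne']
        ring
      calc (Υ ^ 3)⁻¹ * (w j * w k) * (w j * w k)
          = (Υ ^ 3)⁻¹ * (Nc j * Nc k) := hL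
        _ ≤ (R:ℝ) * s * s * ((C:ℝ) * (Υ * s))⁻¹ * Stot := by
            rw [← mul_le_mul_iff_of_pos_right (mul_pos hΥ3pos hCUs)]
            rw [show (Υ ^ 3)⁻¹ * (Nc j * Nc k) * (Υ ^ 3 * ((C:ℝ) * (Υ * s)))
                = ((Υ ^ 3)⁻¹ * Υ ^ 3) * ((Nc j * Nc k) * ((C:ℝ) * (Υ * s))) from by ring,
              inv_mul_cancel₀ hΥ3pos.ne', one_mul]
            rw [show (R:ℝ) * s * s * ((C:ℝ) * (Υ * s))⁻¹ * Stot * (Υ ^ 3 * ((C:ℝ) * (Υ * s)))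
                = (((C:ℝ) * (Υ * s))⁻¹ * ((C:ℝ) * (Υ * s))) * ((R:ℝ) * s * s * Stot * Υ ^ 3)
                from by ring,
              inv_mul_cancel₀ hCUs.ne', one_mul]
            linarith only [mul_le_mul_of_nonneg_left hkey hΥ0.le]
        _ = (R:ℝ) * (s * s * (((C:ℝ) * (Υ * s))⁻¹ * ((w j)⁻¹ * (w k)⁻¹))) * Stot * (w j * w k) :=
            hRt.symm
    -- Kantorovich bound
    obtain ⟨Q, hQ_def⟩ : ∃ Q : ℝ, Q = ∑ l, ((w l) * (w l))⁻¹ := ⟨_, rfl⟩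
    have hQ0 : 0 ≤ Q := by
      rw [hQ_def]
      exact Finset.sum_nonneg fun l _ => (inv_pos.mpr (mul_pos (hw_pos l) (hw_pos l))).le
    have hQS : Stot * Q * (4 * Υ) ≤ (C:ℝ) ^ 2 * (1 + Υ) ^ 2 := by
      have hK1 : ∀ l, ((R:ℝ) * s) * ((R:ℝ) * (Υ * s)) * ((w l * w l))⁻¹
          ≤ (R:ℝ) * s + (R:ℝ) * (Υ * s) - Nc l := by
        intro l
        rw [hw_sq l]
        have h2 : 0 ≤ (Nc l - (R:ℝ) * s) * ((R:ℝ) * (Υ * s) - Nc l) :=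
          mul_nonneg (sub_nonneg.mpr (hNc_ge l)) (sub_nonneg.mpr (hNc_le l))
        have h3 : 0 < (Nc l)⁻¹ := inv_pos.mpr (hNc_pos l)
        have h4 : (R:ℝ) * s + (R:ℝ) * (Υ * s) - Nc l
            - ((R:ℝ) * s) * ((R:ℝ) * (Υ * s)) * (Nc l)⁻¹
            = (Nc l)⁻¹ * ((Nc l - (R:ℝ) * s) * ((R:ℝ) * (Υ * s) - Nc l)) := by
          field_simp [(hNc_pos l).ne']
          ring
        linarith only [h4, mul_nonneg h3.le h2]
      have hK2 : Stot + ((R:ℝ) * s) * ((R:ℝ) * (Υ * s)) * Q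
          ≤ (C:ℝ) * ((R:ℝ) * s + (R:ℝ) * (Υ * s)) := by
        have h4 := Finset.sum_le_sum fun l (_ : l ∈ Finset.univ) => hK1 l
        rw [← Finset.mul_sum] at h4
        have h5 : ∑ l, ((R:ℝ) * s + (R:ℝ) * (Υ * s) - Nc l)
            = (C:ℝ) * ((R:ℝ) * s + (R:ℝ) * (Υ * s)) - Stot := by
          rw [Finset.sum_sub_distrib, hconstC, hStot_def]
        rw [h5] at h4
        rw [hQ_def]
        linarith
      have hRs2 : (0:ℝ) < ((R:ℝ) * s) ^ 2 := pow_pos (mul_pos hR0 hs) 2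
      have hAM : 4 * (Stot * (((R:ℝ) * s) * ((R:ℝ) * (Υ * s)) * Q))
          ≤ (Stot + ((R:ℝ) * s) * ((R:ℝ) * (Υ * s)) * Q) ^ 2 := by
        linarith only [sq_nonneg (Stot - ((R:ℝ) * s) * ((R:ℝ) * (Υ * s)) * Q)]
      have h6 : 0 ≤ Stot + ((R:ℝ) * s) * ((R:ℝ) * (Υ * s)) * Q :=
        add_nonneg hStot_pos.le
          (mul_nonneg (mul_nonneg (mul_pos hR0 hs).le (mul_pos hR0 (mul_pos hΥ0 hs)).le) hQ0)
      have h5 : (Stot + ((R:ℝ) * s) * ((R:ℝ) * (Υ * s)) * Q) ^ 2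
          ≤ ((C:ℝ) * ((R:ℝ) * s + (R:ℝ) * (Υ * s))) ^ 2 :=
        pow_le_pow_left₀ h6 hK2 2
      have hbig : (Stot * Q * (4 * Υ)) * (((R:ℝ) * s) ^ 2)
          ≤ ((C:ℝ) ^ 2 * (1 + Υ) ^ 2) * (((R:ℝ) * s) ^ 2) := by
        linarith only [hAM, h5]
      exact le_of_mul_le_mul_right hbig hRs2
    -- reduce the operator-norm goal to a sum inequality
    have hmain : ∀ xv : Fin C → ℝ,
        ∑ j, ((Mprime p *ᵥ xv) j) ^ 2 ≤ K ^ 2 * ∑ j, (xv j) ^ 2 := by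
      intro xv
      obtain ⟨t, ht_def⟩ : ∃ t : ℝ, t = (∑ j, w j * xv j) / Stot := ⟨_, rfl⟩
      obtain ⟨y, hy_def⟩ : ∃ y : Fin C → ℝ, y = fun j => xv j - t * w j := ⟨_, rfl⟩
      obtain ⟨z, hz_def⟩ : ∃ z : Fin C → ℝ, z = fun j => ∑ k, G j k * y k := ⟨_, rfl⟩
      obtain ⟨σ, hσ_def⟩ : ∃ σ : ℝ, σ = ∑ l, (w l)⁻¹ * z l := ⟨_, rfl⟩
      obtain ⟨u, hu_def⟩ : ∃ u : Fin C → ℝ, u = fun j => ∑ k, G j k * xv k := ⟨_, rfl⟩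
      have hz_app : ∀ j, z j = ∑ k, G j k * y k := fun j => by rw [hz_def]
      have hy_app : ∀ j, y j = xv j - t * w j := fun j => by rw [hy_def]
      have hu_app : ∀ j, u j = ∑ k, G j k * xv k := fun j => by rw [hu_def]
      have hwxv : ∑ j, w j * xv j = t * Stot := by
        rw [ht_def, div_mul_cancel₀ _ hStot_pos.ne']
      have hyw : ∑ j, w j * y j = 0 := by
        have h1 : ∀ j, w j * y j = w j * xv j - t * (w j * w j) := fun j => by
          rw [hy_app]; ring
        rw [Finset.sum_congr rfl fun j _ => h1 j, Finset.sum_sub_distrib, ← Finset.mul_sum,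
          hStot_w, hwxv, sub_self]
      have hynorm : ∑ j, y j ^ 2 ≤ ∑ j, xv j ^ 2 := by
        have h1 : ∀ j, y j ^ 2 = xv j ^ 2 - 2 * t * (w j * xv j) + t ^ 2 * (w j * w j) :=
          fun j => by rw [hy_app]; ring
        rw [Finset.sum_congr rfl fun j _ => h1 j]
        rw [Finset.sum_add_distrib, Finset.sum_sub_distrib, ← Finset.mul_sum, ← Finset.mul_sum,
          hStot_w, hwxv]
        linarith only [mul_nonneg (sq_nonneg t) hStot_pos.le]
      -- z is orthogonal to w
      have hzw : ∑ j, w j * z j = 0 := by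
        have h1 : ∀ j, w j * z j = ∑ k, (G j k * w j) * y k := by
          intro j; rw [hz_app, Finset.mul_sum]
          exact Finset.sum_congr rfl fun k _ => by ring
        rw [Finset.sum_congr rfl fun j _ => h1 j, Finset.sum_comm]
        have h2 : ∀ k, ∑ j, (G j k * w j) * y k = w k * y k := by
          intro k; rw [← Finset.sum_mul, hGcol k]
        rw [Finset.sum_congr rfl fun k _ => h2 k, hyw]
      -- the contraction bound on z
      have hz2 : ∑ j, z j ^ 2 ≤ r ^ 2 * ∑ j, y j ^ 2 := by
        obtain ⟨Bm, hBm_def⟩ : ∃ Bm : Matrix (Fin C) (Fin C) ℝ,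
            Bm = Matrix.of (fun j k => G j k - (Υ ^ 3)⁻¹ * (w j * w k) / Stot) := ⟨_, rfl⟩
        have hBm_apply : ∀ j k, Bm j k = G j k - (Υ ^ 3)⁻¹ * (w j * w k) / Stot :=
          fun j k => by rw [hBm_def]; rfl
        have hBnn : ∀ j k, 0 ≤ Bm j k := fun j k => by
          rw [hBm_apply]; exact sub_nonneg.mpr (hGlb j k)
        have hBrow : ∀ j, ∑ k, Bm j k * w k = r * w j := by
          intro j
          have h1 : ∀ k, Bm j k * w k
              = G j k * w k - ((Υ ^ 3)⁻¹ * w j / Stot) * (w k * w k) := fun k => by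
            rw [hBm_apply]; ring
          rw [Finset.sum_congr rfl fun k _ => h1 k, Finset.sum_sub_distrib, hGrow,
            ← Finset.mul_sum, hStot_w]
          rw [show (Υ ^ 3)⁻¹ * w j / Stot * Stot = (Υ ^ 3)⁻¹ * w j from
            div_mul_cancel₀ _ hStot_pos.ne']
          rw [hr_def]; ring
        have hBcol : ∀ k, ∑ j, Bm j k * w j = r * w k := by
          intro k
          have h1 : ∀ j, Bm j k = Bm k j := fun j => by
            rw [hBm_apply, hBm_apply, hGsym j k]; ring
          rw [Finset.sum_congr rfl fun j _ => by rw [h1 j]]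
          exact hBrow k
        have hzB : ∀ j, z j = ∑ k, Bm j k * y k := by
          intro j
          have h1 : ∀ k, Bm j k * y k
              = G j k * y k - ((Υ ^ 3)⁻¹ * w j / Stot) * (w k * y k) := fun k => by
            rw [hBm_apply]; ring
          rw [Finset.sum_congr rfl fun k _ => h1 k, Finset.sum_sub_distrib, ← Finset.mul_sum,
            hyw, mul_zero, sub_zero, hz_app]
        calc ∑ j, z j ^ 2 = ∑ j, (∑ k, Bm j k * y k) ^ 2 :=
              Finset.sum_congr rfl fun j _ => by rw [hzB j]
          _ ≤ r ^ 2 * ∑ j, y j ^ 2 := spec_lemma Bm w r hw_pos hBnn hBrow hBcol y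
      -- the pointwise formula for Mprime *ᵥ xv
      obtain ⟨a, ha_def⟩ : ∃ a : Fin R → ℝ,
          a = fun i => (v i)⁻¹ * ∑ k, p i k * ((w k)⁻¹ * xv k) := ⟨_, rfl⟩
      obtain ⟨β, hβ_def⟩ : ∃ β : ℝ, β = ∑ i', (v i')⁻¹ * a i' := ⟨_, rfl⟩
      obtain ⟨b, hb_def⟩ : ∃ b : Fin R → ℝ,
          b = fun i => a i - (R:ℝ)⁻¹ * (v i * β) := ⟨_, rfl⟩
      obtain ⟨c, hc_def⟩ : ∃ c : Fin C → ℝ,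
          c = fun j => (w j)⁻¹ * ∑ i, p i j * ((v i)⁻¹ * b i) := ⟨_, rfl⟩
      have ha_app : ∀ i, a i = (v i)⁻¹ * ∑ k, p i k * ((w k)⁻¹ * xv k) := fun i => by rw [ha_def]
      have hb_app : ∀ i, b i = a i - (R:ℝ)⁻¹ * (v i * β) := fun i => by rw [hb_def]
      have hc_app : ∀ j, c j = (w j)⁻¹ * ∑ i, p i j * ((v i)⁻¹ * b i) := fun j => by rw [hc_def]
      have hMx : ∀ j, (Mprime p *ᵥ xv) j = c j - (C : ℝ)⁻¹ * (w j * ∑ l, (w l)⁻¹ * c l) := by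
        intro j
        exact Mprime_mulVec p v w hvs hws xv a b c ha_app
          (fun i => by rw [hb_app, hβ_def]) hc_app j
      -- rewrite c in terms of u
      have hva : ∀ i, (v i)⁻¹ * a i = (Nr i)⁻¹ * ∑ k, p i k * ((w k)⁻¹ * xv k) := by
        intro i
        rw [ha_app, ← mul_assoc, ← mul_inv, hv_sq i]
      have hupart : ∀ j, u j = (w j)⁻¹ * ∑ i, p i j * ((v i)⁻¹ * a i) := by
        intro j
        rw [hu_app]
        calc (∑ k, G j k * xv k)
            = ∑ k, ∑ i, ((w j)⁻¹ * p i j * ((Nr i)⁻¹ * (p i k * (w k)⁻¹))) * xv k := by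
              refine Finset.sum_congr rfl fun k _ => ?_
              rw [hG_apply, Finset.sum_mul]
          _ = ∑ i, ∑ k, ((w j)⁻¹ * p i j * ((Nr i)⁻¹ * (p i k * (w k)⁻¹))) * xv k :=
              Finset.sum_comm
          _ = ∑ i, (w j)⁻¹ * (p i j * ((Nr i)⁻¹ * ∑ k, p i k * ((w k)⁻¹ * xv k))) := by
              refine Finset.sum_congr rfl fun i _ => ?_
              simp only [Finset.mul_sum]
              exact Finset.sum_congr rfl fun k _ => by ring
          _ = (w j)⁻¹ * ∑ i, p i j * ((v i)⁻¹ * a i) := by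
              rw [Finset.mul_sum]
              exact Finset.sum_congr rfl fun i _ => by rw [hva i]
      have hcu : ∀ j, c j = u j - (R:ℝ)⁻¹ * β * w j := by
        intro j
        rw [hc_app]
        have h2 : ∀ i, p i j * ((v i)⁻¹ * b i)
            = p i j * ((v i)⁻¹ * a i) - (R:ℝ)⁻¹ * β * p i j := by
          intro i
          rw [show p i j * ((v i)⁻¹ * b i)
              = p i j * ((v i)⁻¹ * a i)
                - (R:ℝ)⁻¹ * β * (((v i)⁻¹ * v i) * p i j)
                + p i j * ((v i)⁻¹ * (b i - (a i - (R:ℝ)⁻¹ * (v i * β)))) from by ring,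
            hb_app i]
          rw [inv_mul_cancel₀ (hv_pos i).ne', one_mul]
          ring
        rw [Finset.sum_congr rfl fun i _ => h2 i, Finset.sum_sub_distrib, ← Finset.mul_sum,
          mul_sub, hupart j]
        rw [show (∑ i, p i j) = Nc j from (hNc_app j).symm]
        rw [show (w j)⁻¹ * ((R:ℝ)⁻¹ * β * Nc j) = (R:ℝ)⁻¹ * β * ((w j)⁻¹ * Nc j) from by ring,
          hwNc j]
      -- u in terms of z
      have huz : ∀ j, u j = z j + t * w j := by
        intro j
        rw [hu_app]
        have h1 : ∀ k, G j k * xv k = G j k * y k + t * (G j k * w k) := by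
          intro k
          rw [hy_app]; ring
        rw [Finset.sum_congr rfl fun k _ => h1 k, Finset.sum_add_distrib, ← Finset.mul_sum,
          hGrow j, hz_app]
      -- the final pointwise formula
      have hMx3 : ∀ j, (Mprime p *ᵥ xv) j = z j - (C:ℝ)⁻¹ * σ * w j := by
        intro j
        rw [hMx j]
        have hone : ∀ l : Fin C, (w l)⁻¹ * w l = 1 := fun l => inv_mul_cancel₀ (hw_pos l).ne'
        have hσc : ∑ l, (w l)⁻¹ * c l = (σ + t * (C:ℝ)) - (R:ℝ)⁻¹ * β * (C:ℝ) := by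
          have h1 : ∀ l, (w l)⁻¹ * c l
              = ((w l)⁻¹ * z l + t * ((w l)⁻¹ * w l)) - (R:ℝ)⁻¹ * β * ((w l)⁻¹ * w l) := by
            intro l; rw [hcu l, huz l]; ring
          have h2 : ∀ l, (w l)⁻¹ * c l = ((w l)⁻¹ * z l + t) - (R:ℝ)⁻¹ * β := by
            intro l; rw [h1 l, hone l]; ring
          rw [Finset.sum_congr rfl fun l _ => h2 l, Finset.sum_sub_distrib,
            Finset.sum_add_distrib, hconstC, hconstC, hσ_def]
          ring
        rw [hσc, hcu j, huz j]
        have hCC : (C:ℝ)⁻¹ * (C:ℝ) = 1 := inv_mul_cancel₀ hC0.ne'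
        linear_combination (-(t * w j) + (R:ℝ)⁻¹ * β * w j) * hCC
      -- expand the norm of Mprime *ᵥ xv
      have hfs : ∑ j, ((Mprime p *ᵥ xv) j) ^ 2
          = (∑ j, z j ^ 2) + ((C:ℝ) ^ 2)⁻¹ * σ ^ 2 * Stot := by
        have h1 : ∀ j, ((Mprime p *ᵥ xv) j) ^ 2
            = z j ^ 2 - (2 * (C:ℝ)⁻¹ * σ) * (w j * z j)
              + (((C:ℝ) ^ 2)⁻¹ * σ ^ 2) * (w j * w j) := by
          intro j; rw [hMx3 j]; ring
        rw [Finset.sum_congr rfl fun j _ => h1 j, Finset.sum_add_distrib,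
          Finset.sum_sub_distrib, ← Finset.mul_sum, ← Finset.mul_sum, hzw, hStot_w, mul_zero,
          sub_zero]
      -- bound σ²
      obtain ⟨E, hE_def⟩ : ∃ E : ℝ, E = ∑ l, ((w l)⁻¹ - ((C:ℝ) / Stot) * w l) ^ 2 := ⟨_, rfl⟩
      have hσ_alt : σ = ∑ l, z l * ((w l)⁻¹ - ((C:ℝ) / Stot) * w l) := by
        have h1 : ∀ l, z l * ((w l)⁻¹ - ((C:ℝ) / Stot) * w l)
            = (w l)⁻¹ * z l - ((C:ℝ) / Stot) * (w l * z l) := fun l => by ring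
        rw [hσ_def]
        rw [Finset.sum_congr rfl fun l _ => h1 l, Finset.sum_sub_distrib, ← Finset.mul_sum,
          hzw, mul_zero, sub_zero]
      have hσ2 : σ ^ 2 ≤ (∑ j, z j ^ 2) * E := by
        rw [hσ_alt, hE_def]
        exact Finset.sum_mul_sq_le_sq_mul_sq Finset.univ _ _
      have hE_eq : E = Q - (C:ℝ) ^ 2 / Stot := by
        have h1 : ∀ l, ((w l)⁻¹ - ((C:ℝ) / Stot) * w l) ^ 2
            = (w l * w l)⁻¹ - 2 * ((C:ℝ) / Stot) + ((C:ℝ) / Stot) ^ 2 * (w l * w l) := by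
          intro l
          have hwne : w l ≠ 0 := (hw_pos l).ne'
          field_simp [hwne]
          ring
        rw [hE_def, Finset.sum_congr rfl fun l _ => h1 l, Finset.sum_add_distrib,
          Finset.sum_sub_distrib, ← Finset.mul_sum, ← Finset.mul_sum, hStot_w, hconstC,
          ← hQ_def]
        field_simp [hStot_pos.ne']
        ring
      -- combine everything
      have hz2' : ∑ j, z j ^ 2 ≤ r ^ 2 * ∑ j, xv j ^ 2 :=
        le_trans hz2 (mul_le_mul_of_nonneg_left hynorm (sq_nonneg r))
      have hzsq0 : 0 ≤ ∑ j, z j ^ 2 := Finset.sum_nonneg fun j _ => sq_nonneg _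
      have hstep1 : ∑ j, ((Mprime p *ᵥ xv) j) ^ 2
          ≤ (∑ j, z j ^ 2) * (Stot * Q / (C:ℝ) ^ 2) := by
        rw [hfs]
        have h2 : ((C:ℝ) ^ 2)⁻¹ * σ ^ 2 * Stot
            ≤ ((C:ℝ) ^ 2)⁻¹ * ((∑ j, z j ^ 2) * E) * Stot := by
          have h3 := mul_le_mul_of_nonneg_left hσ2
            (show (0:ℝ) ≤ ((C:ℝ) ^ 2)⁻¹ by positivity)
          exact mul_le_mul_of_nonneg_right h3 hStot_pos.le
        have hid : (∑ j, z j ^ 2) + ((C:ℝ) ^ 2)⁻¹ * ((∑ j, z j ^ 2) * E) * Stot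
            = (∑ j, z j ^ 2) * (Stot * Q / (C:ℝ) ^ 2) := by
          rw [hE_eq]
          field_simp [hStot_pos.ne', hC0.ne']
          ring
        linarith
      have hQC : Stot * Q / (C:ℝ) ^ 2 ≤ (1 + Υ) ^ 2 / (4 * Υ) := by
        rw [div_le_div_iff₀ (by positivity) (by linarith : (0:ℝ) < 4 * Υ)]
        linarith only [hQS]
      have hQC0 : 0 ≤ Stot * Q / (C:ℝ) ^ 2 :=
        div_nonneg (mul_nonneg hStot_pos.le hQ0) (by positivity)
      calc ∑ j, ((Mprime p *ᵥ xv) j) ^ 2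
          ≤ (∑ j, z j ^ 2) * (Stot * Q / (C:ℝ) ^ 2) := hstep1
        _ ≤ (r ^ 2 * ∑ j, xv j ^ 2) * ((1 + Υ) ^ 2 / (4 * Υ)) :=
            mul_le_mul hz2' hQC hQC0
              (mul_nonneg (sq_nonneg r) (Finset.sum_nonneg fun j _ => sq_nonneg _))
        _ = (r ^ 2 * (1 + Υ) ^ 2 / (4 * Υ)) * ∑ j, xv j ^ 2 := by ring
        _ ≤ K ^ 2 * ∑ j, xv j ^ 2 :=
            mul_le_mul_of_nonneg_right hpoly (Finset.sum_nonneg fun j _ => sq_nonneg _)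
    -- from the sum inequality to the operator norm bound
    unfold l2OpNorm
    apply ContinuousLinearMap.opNorm_le_bound _ hK0
    intro x
    rw [LinearMap.coe_toContinuousLinearMap']
    obtain ⟨xv, hxv_def⟩ : ∃ xv : Fin C → ℝ, xv = (WithLp.equiv 2 (Fin C → ℝ)) x := ⟨_, rfl⟩
    have hnx : ‖x‖ = Real.sqrt (∑ j, (xv j) ^ 2) := by
      rw [EuclideanSpace.norm_eq]
      congr 1
      refine Finset.sum_congr rfl fun j _ => ?_
      rw [Real.norm_eq_abs, sq_abs, hxv_def]
      rfl
    have happ : Matrix.toEuclideanLin (Mprime p) x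
        = (WithLp.equiv 2 (Fin C → ℝ)).symm (Mprime p *ᵥ xv) := by
      subst hxv_def
      exact Matrix.toEuclideanLin_apply _ _
    rw [happ]
    have hny : ‖(WithLp.equiv 2 (Fin C → ℝ)).symm (Mprime p *ᵥ xv)‖
        = Real.sqrt (∑ j, ((Mprime p *ᵥ xv) j) ^ 2) := by
      rw [EuclideanSpace.norm_eq]
      congr 1
      refine Finset.sum_congr rfl fun j _ => ?_
      show ‖(Mprime p *ᵥ xv) j‖ ^ 2 = _
      rw [Real.norm_eq_abs, sq_abs]
    rw [hny, hnx]
    calc Real.sqrt (∑ j, ((Mprime p *ᵥ xv) j) ^ 2)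
        ≤ Real.sqrt (K ^ 2 * ∑ j, (xv j) ^ 2) := Real.sqrt_le_sqrt (hmain xv)
      _ = K * Real.sqrt (∑ j, (xv j) ^ 2) := by
          rw [Real.sqrt_mul (sq_nonneg K), Real.sqrt_sq hK0]

end CollapsedGibbs
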